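/- Let (X_n) satisfy X_0 = a_0 and X_n = a_n + ∑_{j=1}^m b_j X_{⌊p_j n⌋} for n ≥ 1, where a_n = 0 for all n > n_0. If there is a constant C such that |X_k| ≤ C k^{s_0} for all 1 ≤ k ≤ max(n_0, max_j 1/p_j), then |X_k| ≤ C k^{s_0} for every positive integer k. -/
import Mathlib


open Finset

theorem stmt_5 (m : ℕ) (hm : 1 ≤ m) (b p : Fin m → ℝ)
    (hb : ∀ j, 0 < b j) (hsum : 1 < ∑ j, b j)
    (hp : ∀ j, p j ∈ Set.Ioo (0 : ℝ) 1)
    (s₀ : ℝ) (hs₀ : 0 < s₀) (hroot : ∑ j, b j * p j ^ s₀ = 1)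
    (n₀ : ℕ) (a : ℕ → ℝ) (ha : ∀ n, n₀ < n → a n = 0)
    (X : ℕ → ℝ) (hX0 : X 0 = a 0)
    (hXrec : ∀ n : ℕ, 1 ≤ n → X n = a n + ∑ j, b j * X ⌊p j * n⌋₊)
    (C : ℝ)
    (hC : ∀ k : ℕ, 1 ≤ k → (k : ℝ) ≤ max (n₀ : ℝ) (⨆ j, 1 / p j) →
      |X k| ≤ C * (k : ℝ) ^ s₀) :
    ∀ k : ℕ, 1 ≤ k → |X k| ≤ C * (k : ℝ) ^ s₀ := by
  have hC0 : 0 ≤ C := by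
    have j0 : Fin m := ⟨0, hm⟩
    have hpj0 := hp j0
    have h1p : (1:ℝ) ≤ 1 / p j0 := by
      rw [le_div_iff₀ hpj0.1]; linarith [hpj0.2]
    have hsup : (1:ℝ) ≤ ⨆ j, 1 / p j :=
      h1p.trans (le_ciSup (f := fun j => 1 / p j) (Set.finite_range _).bddAbove j0)
    have h := hC 1 le_rfl (by exact_mod_cast le_max_of_le_right hsup)
    have h2 := abs_nonneg (X 1)
    simp only [Nat.cast_one, Real.one_rpow, mul_one] at h
    linarith
  intro k
  induction k using Nat.strong_induction_on with
  | _ k ih =>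
  intro hk
  by_cases hsmall : (k:ℝ) ≤ max (n₀:ℝ) (⨆ j, 1 / p j)
  · exact hC k hk hsmall
  · push_neg at hsmall
    have hkn₀ : n₀ < k := by
      exact_mod_cast lt_of_le_of_lt (le_max_left _ (⨆ j, 1 / p j)) hsmall
    have hk0 : (0:ℝ) < k := by
      have : (0:ℕ) < k := hk
      exact_mod_cast this
    have hfloor : ∀ j, 1 ≤ ⌊p j * k⌋₊ ∧ ⌊p j * k⌋₊ < k := by
      intro j
      have hpj := hp j
      have hk1 : 1 / p j < k :=
        lt_of_le_of_lt ((le_ciSup (f := fun j => 1 / p j) (Set.finite_range _).bddAbove j).trans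
          (le_max_right (n₀:ℝ) _)) hsmall
      rw [div_lt_iff₀ hpj.1] at hk1
      have h1 : (1:ℝ) ≤ p j * k := by nlinarith
      constructor
      · exact Nat.le_floor (by exact_mod_cast h1)
      · have hlt : p j * k < k := by nlinarith [hpj.2]
        exact (Nat.floor_lt (by positivity)).2 hlt
    rw [hXrec k hk, ha k hkn₀, zero_add]
    calc |∑ j, b j * X ⌊p j * k⌋₊| ≤ ∑ j, |b j * X ⌊p j * k⌋₊| :=
          Finset.abs_sum_le_sum_abs _ _
      _ ≤ ∑ j, b j * (C * (p j * k) ^ s₀) := by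
          apply Finset.sum_le_sum; intro j _
          rw [abs_mul, abs_of_pos (hb j)]
          refine mul_le_mul_of_nonneg_left ?_ (hb j).le
          refine (ih ⌊p j * k⌋₊ (hfloor j).2 (hfloor j).1).trans ?_
          refine mul_le_mul_of_nonneg_left ?_ hC0
          exact Real.rpow_le_rpow (by positivity)
            (Nat.floor_le (by have := (hp j).1; positivity)) hs₀.le
      _ = C * (k:ℝ) ^ s₀ * ∑ j, b j * p j ^ s₀ := by
          rw [Finset.mul_sum]
          refine Finset.sum_congr rfl fun j _ => ?_
          rw [Real.mul_rpow (hp j).1.le hk0.le]; ring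
      _ = C * (k:ℝ) ^ s₀ := by rw [hroot, mul_one]
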